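/- If an infinite cardinal κ satisfies 2^κ = κ⁺, then (κ⁺ over κ) ↛ (κ⁺ over κ)₂: there exists a coloring c : κ⁺ × κ → 2 such that for neither i ∈ {0,1} do there exist A ⊆ κ⁺ of size κ⁺ and B ⊆ κ of size κ with c constantly i on A × B. -/
import Mathlib

open Cardinal

namespace SPFAux

open Set Ordinal
open scoped Classical

/-- From a set of full size `κ` we can pick a point outside a small set. -/
lemma exists_notMem {κ : Cardinal.{0}} {S U : Set Ordinal.{0}}
    (hS : #S = Cardinal.lift.{1} κ) (hU : #U < Cardinal.lift.{1} κ) :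
    ∃ x, x ∈ S ∧ x ∉ U := by
  by_contra h
  push_neg at h
  have : #S ≤ #U := Cardinal.mk_le_mk_of_subset h
  rw [hS] at this
  exact absurd this (not_le.2 hU)

lemma used_small {κ : Cardinal.{0}} (hκ : ℵ₀ ≤ κ) {β : Ordinal.{0}} (hβ : β < κ.ord)
    (f g : ↥(Set.Iio β) → Ordinal.{0}) (z : Ordinal.{0}) :
    #((Set.range f ∪ Set.range g ∪ {z} : Set Ordinal.{0})) < Cardinal.lift.{1} κ := by
  have hβc : Cardinal.lift.{1} β.card < Cardinal.lift.{1} κ :=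
    Cardinal.lift_lt.2 (Cardinal.lt_ord.1 hβ)
  have hκ' : ℵ₀ ≤ Cardinal.lift.{1} κ := by
    simpa using Cardinal.lift_le.{1}.2 hκ
  have hIio : #(↥(Set.Iio β)) = Cardinal.lift.{1} β.card := Ordinal.mk_Iio_ordinal β
  have h1 : #(Set.range f) < Cardinal.lift.{1} κ :=
    lt_of_le_of_lt (le_trans Cardinal.mk_range_le (le_of_eq hIio)) hβc
  have h2 : #(Set.range g) < Cardinal.lift.{1} κ :=
    lt_of_le_of_lt (le_trans Cardinal.mk_range_le (le_of_eq hIio)) hβc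
  calc #((Set.range f ∪ Set.range g ∪ {z} : Set Ordinal.{0}))
      ≤ #((Set.range f ∪ Set.range g : Set Ordinal.{0})) + #({z} : Set Ordinal.{0}) :=
        Cardinal.mk_union_le _ _
    _ ≤ (#(Set.range f) + #(Set.range g)) + 1 := by
        gcongr
        · exact Cardinal.mk_union_le _ _
        · exact le_of_eq (Cardinal.mk_singleton z)
    _ < Cardinal.lift.{1} κ := by
        apply Cardinal.add_lt_of_lt hκ' (Cardinal.add_lt_of_lt hκ' h1 h2)
        exact lt_of_lt_of_le Cardinal.one_lt_aleph0 hκ'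

lemma exists_pair {κ : Cardinal.{0}} (hκ : ℵ₀ ≤ κ) {S : Set Ordinal.{0}}
    (hS : #S = Cardinal.lift.{1} κ) {β : Ordinal.{0}} (hβ : β < κ.ord)
    (f g : ↥(Set.Iio β) → Ordinal.{0}) :
    ∃ pq : Ordinal.{0} × Ordinal.{0}, pq.1 ∈ S ∧ pq.2 ∈ S ∧ pq.1 ≠ pq.2 ∧
      pq.1 ∉ Set.range f ∧ pq.1 ∉ Set.range g ∧
      pq.2 ∉ Set.range f ∧ pq.2 ∉ Set.range g := by
  obtain ⟨q, hqS, hq⟩ := exists_notMem hS (used_small hκ hβ f g 0)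
  obtain ⟨p, hpS, hp⟩ := exists_notMem hS (used_small hκ hβ f g q)
  simp only [Set.mem_union, Set.mem_singleton_iff, not_or] at hq hp
  exact ⟨(p, q), hpS, hqS, hp.2, hp.1.1, hp.1.2, hq.1.1, hq.1.2⟩

/-- The recursion step picking a fresh pair of points of `F i` when `β` codes `i`. -/
noncomputable def step (κ : Cardinal.{0}) (hκ : ℵ₀ ≤ κ) {ι : Type 1} (F : ι → Set Ordinal.{0})
    (hF : ∀ i, #(F i) = Cardinal.lift.{1} κ) (j : ι ↪ ↥(Set.Iio κ.ord))
    (β : Ordinal.{0}) (ih : ∀ γ, γ < β → Ordinal.{0} × Ordinal.{0}) :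
    Ordinal.{0} × Ordinal.{0} :=
  if h : ∃ i : ι, ((j i : Ordinal.{0}) = β) then
    (exists_pair hκ (hF h.choose) (h.choose_spec ▸ (j h.choose).2)
      (fun γ : ↥(Set.Iio β) => (ih γ.1 γ.2).1) (fun γ : ↥(Set.Iio β) => (ih γ.1 γ.2).2)).choose
  else (0, 0)

lemma step_spec (κ : Cardinal.{0}) (hκ : ℵ₀ ≤ κ) {ι : Type 1} (F : ι → Set Ordinal.{0})
    (hF : ∀ i, #(F i) = Cardinal.lift.{1} κ) (j : ι ↪ ↥(Set.Iio κ.ord))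
    (β : Ordinal.{0}) (ih : ∀ γ, γ < β → Ordinal.{0} × Ordinal.{0})
    (i : ι) (hji : (j i : Ordinal.{0}) = β) :
    (step κ hκ F hF j β ih).1 ∈ F i ∧ (step κ hκ F hF j β ih).2 ∈ F i ∧
    (step κ hκ F hF j β ih).1 ≠ (step κ hκ F hF j β ih).2 ∧
    (step κ hκ F hF j β ih).1 ∉ Set.range (fun γ : ↥(Set.Iio β) => (ih γ.1 γ.2).1) ∧
    (step κ hκ F hF j β ih).1 ∉ Set.range (fun γ : ↥(Set.Iio β) => (ih γ.1 γ.2).2) ∧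
    (step κ hκ F hF j β ih).2 ∉ Set.range (fun γ : ↥(Set.Iio β) => (ih γ.1 γ.2).1) ∧
    (step κ hκ F hF j β ih).2 ∉ Set.range (fun γ : ↥(Set.Iio β) => (ih γ.1 γ.2).2) := by
  have hex : ∃ i' : ι, ((j i' : Ordinal.{0}) = β) := ⟨i, hji⟩
  have hc : hex.choose = i :=
    j.injective (Subtype.val_injective (hex.choose_spec.trans hji.symm))
  unfold step
  rw [dif_pos hex]
  have h := (exists_pair hκ (hF hex.choose) (hex.choose_spec ▸ (j hex.choose).2)
      (fun γ : ↥(Set.Iio β) => (ih γ.1 γ.2).1)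
      (fun γ : ↥(Set.Iio β) => (ih γ.1 γ.2).2)).choose_spec
  refine ⟨?_, ?_, h.2.2.1, h.2.2.2.1, h.2.2.2.2.1, h.2.2.2.2.2.1, h.2.2.2.2.2.2⟩
  · rw [← hc]; exact h.1
  · rw [← hc]; exact h.2.1

/-- Key lemma: given at most `κ` many sets of ordinals, each of size `κ`, there is a
2-coloring of the ordinals that is non-constant on each of them. -/
lemma key {κ : Cardinal.{0}} (hκ : ℵ₀ ≤ κ) {ι : Type 1} (F : ι → Set Ordinal.{0})
    (hF : ∀ i, #(F i) = Cardinal.lift.{1} κ) (hι : #ι ≤ Cardinal.lift.{1} κ) :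
    ∃ g : Ordinal.{0} → Fin 2, ∀ i, (∃ x ∈ F i, g x = 0) ∧ (∃ y ∈ F i, g y = 1) := by
  classical
  have hmk : #ι ≤ #(↥(Set.Iio κ.ord)) := by
    rw [Ordinal.mk_Iio_ordinal, Cardinal.card_ord]; exact hι
  obtain ⟨j⟩ := (Cardinal.le_def _ _).1 hmk
  set P : Ordinal.{0} → Ordinal.{0} × Ordinal.{0} :=
    Ordinal.lt_wf.fix (step κ hκ F hF j) with hPdef
  have hP : ∀ β, P β = step κ hκ F hF j β fun γ _ => P γ := fun β =>
    Ordinal.lt_wf.fix_eq (step κ hκ F hF j) β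
  have spec : ∀ i : ι,
      (P (j i)).1 ∈ F i ∧ (P (j i)).2 ∈ F i ∧ (P (j i)).1 ≠ (P (j i)).2 ∧
      (∀ γ, γ < (j i : Ordinal.{0}) → (P (j i)).1 ≠ (P γ).1 ∧ (P (j i)).1 ≠ (P γ).2 ∧
        (P (j i)).2 ≠ (P γ).1 ∧ (P (j i)).2 ≠ (P γ).2) := by
    intro i
    have h := step_spec κ hκ F hF j (j i) (fun γ _ => P γ) i rfl
    rw [← hP (j i)] at h
    obtain ⟨h1, h2, h3, h4, h5, h6, h7⟩ := h
    refine ⟨h1, h2, h3, fun γ hγ => ⟨?_, ?_, ?_, ?_⟩⟩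
    · exact fun he => h4 ⟨⟨γ, hγ⟩, he.symm⟩
    · exact fun he => h5 ⟨⟨γ, hγ⟩, he.symm⟩
    · exact fun he => h6 ⟨⟨γ, hγ⟩, he.symm⟩
    · exact fun he => h7 ⟨⟨γ, hγ⟩, he.symm⟩
  refine ⟨fun x => if x ∈ Set.range (fun i : ι => (P (j i)).1) then 1 else 0, fun i => ?_⟩
  constructor
  · refine ⟨(P (j i)).2, (spec i).2.1, ?_⟩
    dsimp only
    rw [if_neg]
    rintro ⟨i', he⟩
    rcases lt_trichotomy ((j i' : Ordinal.{0})) ((j i : Ordinal.{0})) with h | h | h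
    · exact ((spec i).2.2.2 _ h).2.2.1 he.symm
    · have : i' = i := j.injective (Subtype.val_injective h)
      subst this
      exact (spec i').2.2.1 he
    · exact ((spec i').2.2.2 _ h).2.1 he
  · exact ⟨(P (j i)).1, (spec i).1, if_pos ⟨i, rfl⟩⟩

end SPFAux

/-- The Erdős–Hajnal–Rado negative relation: if `κ` is an infinite cardinal with
`2^κ = κ⁺`, then `(κ⁺ over κ) ↛ (κ⁺ over κ)₂`: there is a coloring
`c : κ⁺ × κ → 2` such that for neither color `i` is there a product `A × B` with
`|A| = κ⁺`, `|B| = κ` on which `c` is constantly `i`. -/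
theorem strong_polarized_fails (κ : Cardinal) (hκ : Cardinal.aleph0 ≤ κ)
    (h2 : 2 ^ κ = Order.succ κ) :
    ∃ c : Ordinal → Ordinal → Fin 2, ∀ i : Fin 2,
      ¬∃ A B : Set Ordinal, A ⊆ Set.Iio (Order.succ κ).ord ∧
        B ⊆ Set.Iio κ.ord ∧
        Cardinal.mk A = Cardinal.lift.{1,0} (Order.succ κ) ∧
        Cardinal.mk B = Cardinal.lift.{1,0} κ ∧
        ∀ a ∈ A, ∀ b ∈ B, c a b = i := by
  classical
  -- the type of subsets of `κ` of size `κ`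
  set T : Type 1 := {B : Set Ordinal // B ⊆ Set.Iio κ.ord ∧ #B = Cardinal.lift.{1} κ} with hT
  haveI : Nonempty T :=
    ⟨⟨Set.Iio κ.ord, subset_rfl, by rw [Ordinal.mk_Iio_ordinal, Cardinal.card_ord]⟩⟩
  -- `T` has at most `κ⁺` elements
  have hTcard : #T ≤ Cardinal.lift.{1} (Order.succ κ) := by
    have hinj : Function.Injective (fun B : T => ({x | x.1 ∈ B.1} : Set ↥(Set.Iio κ.ord))) := by
      intro B₁ B₂ h
      apply Subtype.ext
      ext x
      constructor
      · intro hx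
        exact (Set.ext_iff.1 h ⟨x, B₁.2.1 hx⟩).1 hx
      · intro hx
        exact (Set.ext_iff.1 h ⟨x, B₂.2.1 hx⟩).2 hx
    have h1 : #T ≤ #(Set ↥(Set.Iio κ.ord)) := Cardinal.mk_le_of_injective hinj
    have h2' : #(Set ↥(Set.Iio κ.ord)) = Cardinal.lift.{1} (Order.succ κ) := by
      rw [Cardinal.mk_set, Ordinal.mk_Iio_ordinal, Cardinal.card_ord, ← h2,
        Cardinal.lift_power, Cardinal.lift_two]
    rwa [h2'] at h1
  -- an enumeration of `T` by ordinals below `(κ⁺).ord`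
  have hmk : #T ≤ #(↥(Set.Iio (Order.succ κ).ord)) := by
    rw [Ordinal.mk_Iio_ordinal, Cardinal.card_ord]; exact hTcard
  obtain ⟨e⟩ := (Cardinal.le_def _ _).1 hmk
  set s : ↥(Set.Iio (Order.succ κ).ord) → T := Function.invFun e with hs_def
  have hs : Function.Surjective s := Function.invFun_surjective e.injective
  -- for each `α < (κ⁺).ord`, a row coloring killing all sets enumerated before `α`
  have hrow : ∀ α : ↥(Set.Iio (Order.succ κ).ord),
      ∃ g : Ordinal → Fin 2, ∀ ξ : ↥(Set.Iio (α : Ordinal)),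
        (∃ x ∈ (s ⟨ξ.1, Set.mem_Iio.2 (lt_trans (Set.mem_Iio.1 ξ.2) (Set.mem_Iio.1 α.2))⟩).1, g x = 0) ∧
        (∃ y ∈ (s ⟨ξ.1, Set.mem_Iio.2 (lt_trans (Set.mem_Iio.1 ξ.2) (Set.mem_Iio.1 α.2))⟩).1, g y = 1) := by
    intro α
    apply SPFAux.key hκ (fun ξ : ↥(Set.Iio (α : Ordinal)) => (s ⟨ξ.1, Set.mem_Iio.2 (lt_trans (Set.mem_Iio.1 ξ.2) (Set.mem_Iio.1 α.2))⟩).1)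
      (fun ξ => (s ⟨ξ.1, Set.mem_Iio.2 (lt_trans (Set.mem_Iio.1 ξ.2) (Set.mem_Iio.1 α.2))⟩).2.2)
    rw [Ordinal.mk_Iio_ordinal]
    apply Cardinal.lift_le.2
    have := Cardinal.lt_ord.1 α.2
    exact Order.lt_succ_iff.1 this
  set grow : ↥(Set.Iio (Order.succ κ).ord) → Ordinal → Fin 2 :=
    fun α => (hrow α).choose with hgrow
  refine ⟨fun a b => if h : a < (Order.succ κ).ord then grow ⟨a, h⟩ b else 0, fun i => ?_⟩
  rintro ⟨A, B, hA, hB, hmA, hmB, hconst⟩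
  -- `B` appears in the enumeration, at some `ξ`
  obtain ⟨ξ, hξ⟩ := hs ⟨B, hB, hmB⟩
  -- there is `α ∈ A` above `ξ`
  have hexα : ∃ α ∈ A, (ξ : Ordinal) < α := by
    by_contra h
    push_neg at h
    have hsub : A ⊆ Set.Iio (Order.succ (ξ : Ordinal)) := by
      intro a ha
      exact Order.lt_succ_iff.2 (h a ha)
    have h1 : #A ≤ #(Set.Iio (Order.succ (ξ : Ordinal))) := Cardinal.mk_le_mk_of_subset hsub
    rw [hmA, Ordinal.mk_Iio_ordinal, Ordinal.card_succ] at h1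
    have hξκ : (ξ : Ordinal).card ≤ κ := Order.lt_succ_iff.1 (Cardinal.lt_ord.1 ξ.2)
    have h3 : (ξ : Ordinal).card + 1 ≤ κ := by
      calc (ξ : Ordinal).card + 1 ≤ κ + 1 := by gcongr
        _ ≤ κ + κ := by gcongr; exact Cardinal.one_le_aleph0.trans hκ
        _ = κ := Cardinal.add_eq_self hκ
    have h4 : Cardinal.lift.{1} (Order.succ κ) ≤ Cardinal.lift.{1} κ :=
      h1.trans (Cardinal.lift_le.2 h3)
    exact absurd (Cardinal.lift_le.1 h4) (not_le.2 (Order.lt_succ κ))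
  obtain ⟨α, hαA, hξα⟩ := hexα
  have hαlt : α < (Order.succ κ).ord := hA hαA
  -- the row at `α` is non-constant on `B`
  have hspec := (hrow ⟨α, hαlt⟩).choose_spec ⟨(ξ : Ordinal), hξα⟩
  have hsξ : s ⟨(ξ : Ordinal), Set.mem_Iio.2 (lt_trans hξα hαlt)⟩ = ⟨B, hB, hmB⟩ := by
    rw [← hξ]
  obtain ⟨⟨x, hxB, hx0⟩, ⟨y, hyB, hy1⟩⟩ := hspec
  rw [hsξ] at hxB hyB
  have hcx := hconst α hαA x hxB
  have hcy := hconst α hαA y hyB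
  simp only [dif_pos hαlt] at hcx hcy
  have h0 : i = 0 := by rw [← hcx]; exact hx0
  have h1 : i = 1 := by rw [← hcy]; exact hy1
  rw [h0] at h1
  exact absurd h1 (by decide)
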